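/- Let P be an n×n real symmetric matrix with tr(P) = 0, let ν be its number of positive eigenvalues and θ its number of negative eigenvalues, with ν, θ ≥ 1. Then the sum of the ν positive eigenvalues satisfies Σ_{i=1}^{ν} λᵢ(P) ≤ √( (θν/(θ+ν)) · tr(P²) ). -/

import Mathlib

open Matrix Finset

lemma trace_eq_sum_eig {n : ℕ} (P : Matrix (Fin n) (Fin n) ℝ) (hP : P.IsHermitian) :
    P.trace = ∑ i, hP.eigenvalues i := by
  nth_rewrite 1 [hP.spectral_theorem]
  rw [Unitary.conjStarAlgAut_apply]
  rw [Matrix.trace_mul_cycle,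
    (Matrix.mem_unitaryGroup_iff').mp hP.eigenvectorUnitary.2, Matrix.one_mul]
  simp [Matrix.trace_diagonal]

lemma trace_sq_eq_sum_eig {n : ℕ} (P : Matrix (Fin n) (Fin n) ℝ) (hP : P.IsHermitian) :
    (P ^ 2).trace = ∑ i, hP.eigenvalues i ^ 2 := by
  set U : Matrix (Fin n) (Fin n) ℝ := (hP.eigenvectorUnitary : Matrix (Fin n) (Fin n) ℝ) with hUdef
  set D : Matrix (Fin n) (Fin n) ℝ := Matrix.diagonal (RCLike.ofReal ∘ hP.eigenvalues) with hDdef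
  have hU : star U * U = 1 := (Matrix.mem_unitaryGroup_iff').mp hP.eigenvectorUnitary.2
  have cancel : ∀ X : Matrix (Fin n) (Fin n) ℝ, star U * (U * X) = X := by
    intro X; rw [← Matrix.mul_assoc, hU, Matrix.one_mul]
  have h : P ^ 2 = U * ((D * D) * star U) := by
    nth_rewrite 1 [hP.spectral_theorem]
    rw [Unitary.conjStarAlgAut_apply]
    rw [pow_two]
    simp only [Matrix.mul_assoc]
    rw [cancel]
  rw [h, Matrix.trace_mul_comm, Matrix.mul_assoc, hU, Matrix.mul_one, hDdef,
    Matrix.diagonal_mul_diagonal, Matrix.trace_diagonal]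
  simp [pow_two]

theorem stmt4 {n : ℕ} (P : Matrix (Fin n) (Fin n) ℝ)
    (hP : P.IsHermitian) (htr : P.trace = 0)
    (ν θ : ℕ)
    (hν : ν = (Finset.univ.filter (fun i => 0 < hP.eigenvalues i)).card)
    (hθ : θ = (Finset.univ.filter (fun i => hP.eigenvalues i < 0)).card)
    (hν1 : 1 ≤ ν) (hθ1 : 1 ≤ θ) :
    ∑ i ∈ Finset.univ.filter (fun i => 0 < hP.eigenvalues i), hP.eigenvalues i ≤
      Real.sqrt ((θ * ν / (θ + ν)) * Matrix.trace (P ^ 2)) := by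
  classical
  set f := hP.eigenvalues with hf
  set A := Finset.univ.filter (fun i => 0 < f i) with hA
  set B := Finset.univ.filter (fun i => f i < 0) with hB
  set S := ∑ i ∈ A, f i with hS
  have hSnonneg : 0 ≤ S := Finset.sum_nonneg fun i hi => le_of_lt (Finset.mem_filter.mp hi).2
  -- sum over all = 0
  have hsum0 : ∑ i, f i = 0 := by rw [← trace_eq_sum_eig P hP, htr]
  -- sum over B = -S
  have hsplit : S + ∑ i ∈ Finset.univ.filter (fun i => ¬ 0 < f i), f i = 0 := by
    rw [hS, hA, Finset.sum_filter_add_sum_filter_not, hsum0]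
  have hBsum : ∑ i ∈ B, f i = -S := by
    have h2 : ∑ i ∈ Finset.univ.filter (fun i => ¬ 0 < f i), f i = ∑ i ∈ B, f i := by
      rw [Finset.sum_filter, Finset.sum_filter]
      apply Finset.sum_congr rfl
      intro i _
      by_cases h : f i < 0
      · simp [h, not_lt.mpr (le_of_lt h)]
      · by_cases h' : 0 < f i <;> simp [h, h']
        · linarith [le_antisymm (not_lt.mp h') (not_lt.mp h)]
    linarith [hsplit, h2]
  -- trace of P^2
  have hT : (P ^ 2).trace = ∑ i, f i ^ 2 := trace_sq_eq_sum_eig P hP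
  set T := ∑ i, f i ^ 2 with hTdef
  have hTge : ∑ i ∈ A, f i ^ 2 + ∑ i ∈ B, f i ^ 2 ≤ T := by
    have hdisj : Disjoint A B := by
      rw [Finset.disjoint_filter]
      intro i _ h1; exact not_lt.mpr (le_of_lt h1)
    rw [← Finset.sum_union hdisj]
    exact Finset.sum_le_sum_of_subset_of_nonneg (Finset.subset_univ _)
      (fun i _ _ => sq_nonneg _)
  -- Cauchy-Schwarz
  have hCS1 : S ^ 2 ≤ (ν : ℝ) * ∑ i ∈ A, f i ^ 2 := by
    have := sq_sum_le_card_mul_sum_sq (s := A) (f := f)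
    rwa [hν, hA] at *
  have hCS2 : S ^ 2 ≤ (θ : ℝ) * ∑ i ∈ B, f i ^ 2 := by
    have h := sq_sum_le_card_mul_sum_sq (s := B) (f := f)
    rw [hBsum, neg_pow, neg_one_sq, one_mul] at h
    rwa [hθ, hB] at *
  have hνpos : (0 : ℝ) < ν := by exact_mod_cast hν1
  have hθpos : (0 : ℝ) < θ := by exact_mod_cast hθ1
  have key : S ^ 2 ≤ (θ * ν / (θ + ν)) * T := by
    rw [div_mul_eq_mul_div, le_div_iff₀ (by positivity)]
    have h1 : (θ : ℝ) * S ^ 2 ≤ θ * ν * ∑ i ∈ A, f i ^ 2 := by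
      rw [mul_assoc]; exact mul_le_mul_of_nonneg_left hCS1 hθpos.le
    have h2 : (ν : ℝ) * S ^ 2 ≤ θ * ν * ∑ i ∈ B, f i ^ 2 := by
      rw [mul_comm (θ:ℝ) (ν:ℝ), mul_assoc]
      exact mul_le_mul_of_nonneg_left hCS2 hνpos.le
    nlinarith [mul_le_mul_of_nonneg_left hTge (mul_nonneg hθpos.le hνpos.le)]
  have hTnonneg : 0 ≤ (θ * ν / (θ + ν) : ℝ) * T := le_trans (sq_nonneg S) key
  rw [hT]
  exact (Real.le_sqrt hSnonneg hTnonneg).mpr key
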